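/- Let A, B : ℝ → ℝ be C¹ functions with B'(c)² ≤ 2·A'(c) for all c ∈ ℝ (so that A is nondecreasing), and set x(c,t) := (A(c)/2)·t² + B(c)·t + c. If A is bounded on ℝ, then for every fixed t ∈ ℝ one has lim_{c→+∞} x(c,t) = +∞ and lim_{c→−∞} x(c,t) = −∞; consequently c ↦ x(c,t) is a surjection of ℝ onto ℝ and {(x(c,t), t) : c, t ∈ ℝ} = ℝ². -/

import Mathlib

open Filter intervalIntegral

/-- Key estimate: for `a ≤ b` and `ε > 0`, `|B b - B a| ≤ ε (A b - A a) + (b-a)/(2ε)`. -/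
lemma key_est (A B : ℝ → ℝ) (hA : ContDiff ℝ 1 A) (hB : ContDiff ℝ 1 B)
    (hcond : ∀ c : ℝ, (deriv B c) ^ 2 ≤ 2 * deriv A c)
    {a b ε : ℝ} (hab : a ≤ b) (hε : 0 < ε) :
    |B b - B a| ≤ ε * (A b - A a) + (b - a) / (2 * ε) := by
  have hA' : Continuous (deriv A) := hA.continuous_deriv le_rfl
  have hB' : Continuous (deriv B) := hB.continuous_deriv le_rfl
  have hBft : ∫ x in a..b, deriv B x = B b - B a :=
    integral_deriv_eq_sub (fun x _ => (hB.differentiable one_ne_zero).differentiableAt)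
      (hB'.intervalIntegrable a b)
  have hAft : ∫ x in a..b, deriv A x = A b - A a :=
    integral_deriv_eq_sub (fun x _ => (hA.differentiable one_ne_zero).differentiableAt)
      (hA'.intervalIntegrable a b)
  have hptwise : ∀ x, |deriv B x| ≤ ε * deriv A x + 1 / (2 * ε) := by
    intro x
    have h1 : (deriv B x) ^ 2 ≤ 2 * deriv A x := hcond x
    have h2 : ε ^ 2 * (deriv B x) ^ 2 ≤ ε ^ 2 * (2 * deriv A x) :=
      mul_le_mul_of_nonneg_left h1 (sq_nonneg ε)
    have h3 : 2 * ε * |deriv B x| ≤ 2 * ε ^ 2 * deriv A x + 1 := by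
      nlinarith [sq_nonneg (ε * |deriv B x| - 1), sq_abs (deriv B x)]
    have h4 : |deriv B x| ≤ (2 * ε ^ 2 * deriv A x + 1) / (2 * ε) := by
      rw [le_div_iff₀ (by positivity)]; linarith
    calc |deriv B x| ≤ (2 * ε ^ 2 * deriv A x + 1) / (2 * ε) := h4
      _ = ε * deriv A x + 1 / (2 * ε) := by field_simp
  calc |B b - B a| = |∫ x in a..b, deriv B x| := by rw [hBft]
    _ ≤ ∫ x in a..b, |deriv B x| := intervalIntegral.abs_integral_le_integral_abs hab
    _ ≤ ∫ x in a..b, (ε * deriv A x + 1 / (2 * ε)) := by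
        apply intervalIntegral.integral_mono_on hab
          (hB'.abs.intervalIntegrable a b)
          (((continuous_const.mul hA').add continuous_const).intervalIntegrable a b)
        intro x _; exact hptwise x
    _ = ε * (A b - A a) + (b - a) / (2 * ε) := by
        rw [intervalIntegral.integral_add (f := fun x => ε * deriv A x) ((continuous_const.mul hA').intervalIntegrable a b)
          (intervalIntegrable_const), intervalIntegral.integral_const_mul, hAft,
          intervalIntegral.integral_const]
        simp only [smul_eq_mul]
        ring

theorem stmt8 (A B : ℝ → ℝ) (hA : ContDiff ℝ 1 A) (hB : ContDiff ℝ 1 B)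
    (hcond : ∀ c : ℝ, (deriv B c) ^ 2 ≤ 2 * deriv A c)
    (hbdd : ∃ M : ℝ, ∀ c : ℝ, |A c| ≤ M)
    (X : ℝ → ℝ → ℝ) (hX : ∀ c t, X c t = A c / 2 * t ^ 2 + B c * t + c) :
    (∀ t : ℝ, Filter.Tendsto (fun c => X c t) Filter.atTop Filter.atTop) ∧
    (∀ t : ℝ, Filter.Tendsto (fun c => X c t) Filter.atBot Filter.atBot) ∧
    (∀ t : ℝ, Function.Surjective fun c => X c t) ∧
    {p : ℝ × ℝ | ∃ c t : ℝ, p = (X c t, t)} = Set.univ := by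
  obtain ⟨M, hM⟩ := hbdd
  set C : ℝ → ℝ := fun t => M / 2 * t ^ 2 + (|B 0| + 2 * M * (|t| + 1)) * |t| with hC
  have hlow : ∀ t : ℝ, ∀ c : ℝ, 0 ≤ c → c / 2 - C t ≤ X c t := by
    intro t c hc
    have hε : (0:ℝ) < |t| + 1 := by positivity
    have hkey := key_est A B hA hB hcond hc hε
    simp only [sub_zero] at hkey
    have hAc := hM c; have hA0 := hM 0
    have hAc' : A c - A 0 ≤ 2 * M := by
      have := abs_le.1 hAc; have := abs_le.1 hA0; linarith
    have hb1 : |B c| ≤ |B 0| + 2 * M * (|t| + 1) + c / (2 * (|t| + 1)) := by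
      have h := abs_sub_abs_le_abs_sub (B c) (B 0)
      nlinarith [mul_le_mul_of_nonneg_left hAc' (le_of_lt hε)]
    have hq : c / (2 * (|t| + 1)) * |t| ≤ c / 2 := by
      rw [div_mul_eq_mul_div, div_le_div_iff₀ (by positivity) (by norm_num)]
      nlinarith [abs_nonneg t]
    have h3 : |B c| * |t| ≤ (|B 0| + 2 * M * (|t| + 1)) * |t| + c / 2 := by
      nlinarith [mul_le_mul_of_nonneg_right hb1 (abs_nonneg t)]
    have h4 : B c * t ≥ -(|B c| * |t|) := by
      have := neg_abs_le (B c * t); rw [abs_mul] at this; linarith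
    have h2 : A c / 2 * t ^ 2 ≥ -(M / 2 * t ^ 2) := by
      have : -M ≤ A c := neg_le_of_abs_le hAc
      nlinarith [sq_nonneg t]
    rw [hX]; simp only [hC]; nlinarith
  have hhigh : ∀ t : ℝ, ∀ c : ℝ, c ≤ 0 → X c t ≤ c / 2 + C t := by
    intro t c hc
    have hε : (0:ℝ) < |t| + 1 := by positivity
    have hkey := key_est A B hA hB hcond hc hε
    simp only [zero_sub] at hkey
    rw [abs_sub_comm] at hkey
    have hAc := hM c; have hA0 := hM 0
    have hAc' : A 0 - A c ≤ 2 * M := by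
      have := abs_le.1 hAc; have := abs_le.1 hA0; linarith
    have hb1 : |B c| ≤ |B 0| + 2 * M * (|t| + 1) + -c / (2 * (|t| + 1)) := by
      have h := abs_sub_abs_le_abs_sub (B c) (B 0)
      nlinarith [mul_le_mul_of_nonneg_left hAc' (le_of_lt hε)]
    have hq : -c / (2 * (|t| + 1)) * |t| ≤ -c / 2 := by
      rw [div_mul_eq_mul_div, div_le_div_iff₀ (by positivity) (by norm_num)]
      nlinarith [abs_nonneg t]
    have h3 : |B c| * |t| ≤ (|B 0| + 2 * M * (|t| + 1)) * |t| + -c / 2 := by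
      nlinarith [mul_le_mul_of_nonneg_right hb1 (abs_nonneg t)]
    have h4 : B c * t ≤ |B c| * |t| := by
      have := le_abs_self (B c * t); rw [abs_mul] at this; linarith
    have h2 : A c / 2 * t ^ 2 ≤ M / 2 * t ^ 2 := by
      have : A c ≤ M := le_of_abs_le hAc
      nlinarith [sq_nonneg t]
    rw [hX]; simp only [hC]; nlinarith
  have htop : ∀ t : ℝ, Filter.Tendsto (fun c => X c t) Filter.atTop Filter.atTop := by
    intro t
    have h1 : Tendsto (fun c : ℝ => c / 2) atTop atTop :=
      tendsto_id.atTop_div_const two_pos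
    have h : Tendsto (fun c : ℝ => c / 2 - C t) atTop atTop :=
      (tendsto_atTop_add_const_right _ (-(C t)) h1).congr (fun c => by ring)
    apply tendsto_atTop_mono' _ _ h
    filter_upwards [eventually_ge_atTop (0:ℝ)] with c hc
    exact hlow t c hc
  have hbot : ∀ t : ℝ, Filter.Tendsto (fun c => X c t) Filter.atBot Filter.atBot := by
    intro t
    have h1 : Tendsto (fun c : ℝ => c / 2) atBot atBot :=
      tendsto_id.atBot_div_const two_pos
    have h : Tendsto (fun c : ℝ => c / 2 + C t) atBot atBot :=
      tendsto_atBot_add_const_right _ (C t) h1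
    apply tendsto_atBot_mono' _ _ h
    filter_upwards [eventually_le_atBot (0:ℝ)] with c hc
    exact hhigh t c hc
  have hsurj : ∀ t : ℝ, Function.Surjective fun c => X c t := by
    intro t
    have hcont : Continuous fun c => X c t := by
      have heq : (fun c => X c t) = fun c => A c / 2 * t ^ 2 + B c * t + c := by
        funext c; exact hX c t
      rw [heq]
      exact (((hA.continuous.div_const 2).mul continuous_const).add
        (hB.continuous.mul continuous_const)).add continuous_id
    exact hcont.surjective (htop t) (hbot t)
  refine ⟨htop, hbot, hsurj, ?_⟩
  ext ⟨x, t⟩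
  simp only [Set.mem_setOf_eq, Set.mem_univ, iff_true]
  obtain ⟨c, hc⟩ := hsurj t x
  exact ⟨c, t, by simp [← hc]⟩
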